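/- The traction exerted by the Stokes flow on the surface of the sphere is, up to the ambient pressure, a constant vector: for every x ∈ ℝ³ with ‖x‖ = R, writing n = x/R for the outward unit normal and Du(x) for the Jacobian matrix of u at x, one has ν·(Du(x) + Du(x)ᵀ)·n − p(x)·n = −p∞·n + (3νv∞/(2R))·e₁. -/

import Mathlib

/-- The velocity field of the analytical Stokes flow past a sphere of radius `R` in a
uniform stream of speed `v∞` (Cartesian form). -/
noncomputable def stokesSphereVelocity (R v : ℝ) (x : EuclideanSpace ℝ (Fin 3)) :
    EuclideanSpace ℝ (Fin 3) :=
  v • EuclideanSpace.single (0 : Fin 3) (1 : ℝ) -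
    (3 * R * v / 4) • ((1 / ‖x‖) • EuclideanSpace.single (0 : Fin 3) (1 : ℝ) +
      (x 0 / ‖x‖ ^ 3) • x) -
    (R ^ 3 * v / 4) • ((1 / ‖x‖ ^ 3) • EuclideanSpace.single (0 : Fin 3) (1 : ℝ) -
      (3 * x 0 / ‖x‖ ^ 5) • x)

/-- The pressure field of the analytical Stokes flow past a sphere of radius `R` in a
uniform stream of speed `v∞`, kinematic viscosity `ν` and far-field pressure `pinf`. -/
noncomputable def stokesSpherePressure (R ν v pinf : ℝ) (x : EuclideanSpace ℝ (Fin 3)) : ℝ :=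
  pinf - (3 * ν * R * v / 2) * x 0 / ‖x‖ ^ 3

/-- The Jacobian matrix `Du(x)` of the Stokes velocity field at `x`. -/
noncomputable def stokesSphereJacobian (R v : ℝ) (x : EuclideanSpace ℝ (Fin 3)) :
    Matrix (Fin 3) (Fin 3) ℝ :=
  Matrix.of fun i j =>
    fderiv ℝ (stokesSphereVelocity R v) x (EuclideanSpace.single j 1) i

/-- The traction `σ·n = ν(Du + Duᵀ)·n − p·n` exerted by the Stokes flow on a surface with
unit normal `n`. -/
noncomputable def stokesSphereTraction (R ν v pinf : ℝ) (x : EuclideanSpace ℝ (Fin 3))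
    (n : Fin 3 → ℝ) : Fin 3 → ℝ :=
  ν • ((stokesSphereJacobian R v x + (stokesSphereJacobian R v x).transpose).mulVec n) -
    stokesSpherePressure R ν v pinf x • n

local notation "E3" => EuclideanSpace ℝ (Fin 3)

lemma hasFDerivAt_norm3 (x : E3) (hx : x ≠ 0) :
    HasFDerivAt (fun y : E3 => ‖y‖) (‖x‖⁻¹ • innerSL ℝ x) x := by
  have hr : (0:ℝ) < ‖x‖ := norm_pos_iff.2 hx
  have h1 : HasFDerivAt (fun y : E3 => ‖y‖ ^ 2) ((2:ℕ) • innerSL ℝ x) x :=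
    (hasStrictFDerivAt_norm_sq x).hasFDerivAt
  have h2 : (‖x‖ ^ 2 : ℝ) ≠ 0 := by positivity
  have h3 := (Real.hasDerivAt_sqrt h2).comp_hasFDerivAt x h1
  have heq : (Real.sqrt ∘ fun y : E3 => ‖y‖ ^ 2) = fun y : E3 => ‖y‖ := by
    funext y; simp [Function.comp, Real.sqrt_sq (norm_nonneg y)]
  rw [heq, Real.sqrt_sq hr.le] at h3
  refine h3.congr_fderiv ?_
  ext h
  simp [ContinuousLinearMap.smul_apply]
  ring

set_option maxHeartbeats 2000000
/-- The traction exerted by the Stokes flow on the surface of the sphere is, up to the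
ambient pressure, a constant vector: for `‖x‖ = R` with outward unit normal `n = x/R`,
`ν(Du(x) + Du(x)ᵀ)·n − p(x)·n = −p∞·n + (3νv∞/(2R))·e₁`. -/
theorem stokesSphere_traction_const (R ν v pinf : ℝ) (hR : 0 < R) (hν : 0 < ν)
    (x : EuclideanSpace ℝ (Fin 3)) (hx : ‖x‖ = R) :
    stokesSphereTraction R ν v pinf x (fun i => x i / R) =
      (-pinf) • (fun i => x i / R) + (3 * ν * v / (2 * R)) • ![1, 0, 0] := by
  have hx0 : x ≠ 0 := by
    intro h
    rw [h, norm_zero] at hx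
    exact hR.ne hx
  have hr : (0:ℝ) < ‖x‖ := norm_pos_iff.2 hx0
  have hN := hasFDerivAt_norm3 x hx0
  have hp0 : HasFDerivAt (fun y : E3 => y 0) (EuclideanSpace.proj (0 : Fin 3) : E3 →L[ℝ] ℝ) x := by
    simpa [PiLp.proj_apply] using (EuclideanSpace.proj (0 : Fin 3) : E3 →L[ℝ] ℝ).hasFDerivAt (x := x)
  have hpinv3 := ((hasDerivAt_pow 3 ‖x‖).inv (pow_ne_zero 3 hr.ne')).comp_hasFDerivAt x hN
  have hpinv5 := ((hasDerivAt_pow 5 ‖x‖).inv (pow_ne_zero 5 hr.ne')).comp_hasFDerivAt x hN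
  have hinv1 := (hasDerivAt_inv hr.ne').comp_hasFDerivAt x hN
  have ht1 := hinv1.smul (hasFDerivAt_const (EuclideanSpace.single (0:Fin 3) (1:ℝ)) x)
  have ht2 := (hp0.mul hpinv3).smul (hasFDerivAt_id x)
  have ht3 := hpinv3.smul (hasFDerivAt_const (EuclideanSpace.single (0:Fin 3) (1:ℝ)) x)
  have ht4 := ((hp0.const_mul (3:ℝ)).mul hpinv5).smul (hasFDerivAt_id x)
  have H := (((hasFDerivAt_const (v • EuclideanSpace.single (0:Fin 3) (1:ℝ)) x).sub
      ((ht1.add ht2).const_smul (3*R*v/4))).sub ((ht3.sub ht4).const_smul (R^3*v/4)))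
  have hfun : (stokesSphereVelocity R v) = (fun y : E3 =>
      v • EuclideanSpace.single (0:Fin 3) (1:ℝ) -
        (3*R*v/4) • (‖y‖⁻¹ • EuclideanSpace.single (0:Fin 3) (1:ℝ) + (y 0 * (‖y‖^3)⁻¹) • y) -
        (R^3*v/4) • ((‖y‖^3)⁻¹ • EuclideanSpace.single (0:Fin 3) (1:ℝ) - (3 * y 0 * (‖y‖^5)⁻¹) • y)) := by
    funext y
    simp only [stokesSphereVelocity, div_eq_mul_inv, one_mul, mul_assoc]
  simp only [Function.comp, id_eq] at H
  have H := H.congr_of_eventuallyEq (f₁ := stokesSphereVelocity R v) (Filter.Eventually.of_forall fun y => by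
    rw [hfun]; simp only [Pi.sub_apply, Pi.add_apply, Pi.smul_apply', Pi.smul_apply, Pi.mul_apply, Pi.inv_apply, Function.comp_apply, id_eq])
  have hfd := H.fderiv
  have hsum : x 0 ^ 2 + x 1 ^ 2 + x 2 ^ 2 = R ^ 2 := by
    have h := real_inner_self_eq_norm_sq x
    rw [hx] at h
    rw [← h]
    simp only [PiLp.inner_apply, RCLike.inner_apply, conj_trivial, Fin.sum_univ_three]
    ring
  funext i
  simp only [stokesSphereTraction, stokesSphereJacobian, stokesSpherePressure, Matrix.of_apply, hfd]
  fin_cases i <;>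
    simp [Matrix.mulVec, dotProduct, Fin.sum_univ_three, Matrix.add_apply,
      Matrix.transpose_apply, Matrix.of_apply, Pi.smul_apply, Pi.sub_apply, Pi.add_apply,
      smul_eq_mul, ContinuousLinearMap.add_apply, ContinuousLinearMap.sub_apply,
      ContinuousLinearMap.smul_apply, ContinuousLinearMap.smulRight_apply,
      ContinuousLinearMap.id_apply, ContinuousLinearMap.zero_apply, ContinuousLinearMap.coe_smul',
      ContinuousLinearMap.coe_id', PiLp.proj_apply, innerSL_apply_apply, EuclideanSpace.single_apply,
      EuclideanSpace.inner_single_right, PiLp.smul_apply, PiLp.add_apply, PiLp.sub_apply,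
      starRingEnd_apply, star_trivial, Matrix.cons_val_zero, Matrix.cons_val_one, Matrix.head_cons,
      hx]
  · linear_combination (norm := (field_simp; ring)) (ν*3*v/(2*R^3) - 3*ν*v*(x 0)^2/R^5) * hsum
  · linear_combination (norm := (field_simp; ring)) (-3*ν*v*(x 0)*(x 1)/R^5) * hsum
  · linear_combination (norm := (field_simp; ring)) (-3*ν*v*(x 0)*(x 2)/R^5) * hsum
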